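/- Let Γ^disc = ⟨x_0, ..., x_{n+1} | R⟩ be the one-relator group with R = x_0^q(x_0,x_1)⋯(x_n,x_{n+1}), and let A be a finite F_p-vector space with a Γ^disc-action factoring through a finite p-group. Suppose: (a) H^i(Γ^disc, F_p) ≅ H^i(G, F_p) for i = 1, 2 for a profinite group G with compatible action, (b) H³(Γ^disc, F_p) = 0 = H³(G, F_p). Then by induction on dim A using the five lemma applied to the long exact sequences of 0 → F_p → A → A' → 0, the comparison maps H¹(G, A) → H¹(Γ^disc, A) and H²(G, A) → H²(Γ^disc, A) are isomorphisms. -/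

import Mathlib

universe v

section helpers
variable {H G M : Type*} [Group H] [Group G]
variable [AddCommGroup M] [DistribMulAction G M]

lemma cb1' (ψ : H → G) (hψ : ∀ x y, ψ (x*y) = ψ x * ψ y) (a : M) (γ δ : H) :
    ψ γ • (ψ δ • a - a) - (ψ (γ*δ) • a - a) + (ψ γ • a - a) = 0 := by
  simp [hψ, mul_smul, smul_sub]

lemma cb2' (ψ : H → G) (hψ : ∀ x y, ψ (x*y) = ψ x * ψ y) (u : H → M) (γ δ ε : H) :
    ψ γ • (ψ δ • u ε - u (δ*ε) + u δ) - (ψ (γ*δ) • u ε - u (γ*δ*ε) + u (γ*δ))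
      + (ψ γ • (u (δ*ε)) - u (γ*(δ*ε)) + u γ) - (ψ γ • u δ - u (γ*δ) + u γ) = 0 := by
  simp only [hψ, mul_smul, smul_sub, smul_add, mul_assoc]
  abel

lemma cb3' (ψ : H → G) (hψ : ∀ x y, ψ (x*y) = ψ x * ψ y) (f : H → H → M) (γ δ ε η : H) :
    ψ γ • (ψ δ • f ε η - f (δ*ε) η + f δ (ε*η) - f δ ε)
    - (ψ (γ*δ) • f ε η - f (γ*δ*ε) η + f (γ*δ) (ε*η) - f (γ*δ) ε)
    + (ψ γ • f (δ*ε) η - f (γ*(δ*ε)) η + f γ (δ*ε*η) - f γ (δ*ε))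
    - (ψ γ • f δ (ε*η) - f (γ*δ) (ε*η) + f γ (δ*(ε*η)) - f γ δ)
    + (ψ γ • f δ ε - f (γ*δ) ε + f γ (δ*ε) - f γ δ) = 0 := by
  simp only [hψ, mul_smul, smul_sub, smul_add, mul_assoc]
  abel

end helpers


lemma coc2_sub {G M : Type*} [Group G] [AddCommGroup M] [DistribMulAction G M]
    (f k : G → G → M)
    (hf : ∀ g h j, g • f h j - f (g*h) j + f g (h*j) - f g h = 0)
    (hk : ∀ g h j, g • k h j - k (g*h) j + k g (h*j) - k g h = 0) :
    ∀ g h j, g • (f h j - k h j) - (f (g*h) j - k (g*h) j)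
      + (f g (h*j) - k g (h*j)) - (f g h - k g h) = 0 := by
  intro g h j
  have h1 : g • (f h j - k h j) - (f (g*h) j - k (g*h) j)
      + (f g (h*j) - k g (h*j)) - (f g h - k g h)
      = (g • f h j - f (g*h) j + f g (h*j) - f g h)
        - (g • k h j - k (g*h) j + k g (h*j) - k g h) := by
    simp only [smul_sub]
    abel
  rw [h1, hf, hk, sub_zero]

/-- The comparison statement for a module `A`. -/
abbrev Cmp18 {Γd G : Type*} [Group Γd] [Group G] (φ : Γd →* G)
    (A : Type v) [AddCommGroup A] [DistribMulAction G A] : Prop :=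
  ((∀ c c' : G → A, (∀ g h, c (g * h) = c g + g • c h) →
        (∀ g h, c' (g * h) = c' g + g • c' h) →
        (∃ a : A, ∀ γ : Γd, c (φ γ) - c' (φ γ) = φ γ • a - a) →
        ∃ a : A, ∀ g : G, c g - c' g = g • a - a) ∧
      (∀ cd : Γd → A, (∀ γ δ, cd (γ * δ) = cd γ + φ γ • cd δ) →
        ∃ c : G → A, (∀ g h, c (g * h) = c g + g • c h) ∧
          ∃ a : A, ∀ γ : Γd, cd γ - c (φ γ) = φ γ • a - a)) ∧
    ((∀ f : G → G → A,
        (∀ g h j, g • f h j - f (g * h) j + f g (h * j) - f g h = 0) →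
        (∃ u : Γd → A, ∀ γ δ, f (φ γ) (φ δ) = φ γ • u δ - u (γ * δ) + u γ) →
        ∃ u : G → A, ∀ g h, f g h = g • u h - u (g * h) + u g) ∧
      (∀ fd : Γd → Γd → A,
        (∀ γ δ ε, φ γ • fd δ ε - fd (γ * δ) ε + fd γ (δ * ε) - fd γ δ = 0) →
        ∃ f : G → G → A,
          (∀ g h j, g • f h j - f (g * h) j + f g (h * j) - f g h = 0) ∧
          ∃ u : Γd → A, ∀ γ δ,
            fd γ δ - f (φ γ) (φ δ) = φ γ • u δ - u (γ * δ) + u γ)) 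

set_option maxHeartbeats 2000000 in
theorem key18 {p : ℕ} [Fact p.Prime] {Γd G : Type*} [Group Γd] [Group G]
    (φ : Γd →* G)
    (h1inj : ∀ c c' : G → ZMod p, (∀ g h, c (g * h) = c g + c h) →
      (∀ g h, c' (g * h) = c' g + c' h) → (∀ γ : Γd, c (φ γ) = c' (φ γ)) → c = c')
    (h1surj : ∀ cd : Γd → ZMod p, (∀ γ δ, cd (γ * δ) = cd γ + cd δ) →
      ∃ c : G → ZMod p, (∀ g h, c (g * h) = c g + c h) ∧ ∀ γ : Γd, cd γ = c (φ γ))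
    (h2inj : ∀ f : G → G → ZMod p,
      (∀ g h j, f h j - f (g * h) j + f g (h * j) - f g h = 0) →
      (∃ u : Γd → ZMod p, ∀ γ δ, f (φ γ) (φ δ) = u δ - u (γ * δ) + u γ) →
      ∃ u : G → ZMod p, ∀ g h, f g h = u h - u (g * h) + u g)
    (h2surj : ∀ fd : Γd → Γd → ZMod p,
      (∀ γ δ ε, fd δ ε - fd (γ * δ) ε + fd γ (δ * ε) - fd γ δ = 0) →
      ∃ f : G → G → ZMod p,
        (∀ g h j, f h j - f (g * h) j + f g (h * j) - f g h = 0) ∧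
        ∃ u : Γd → ZMod p, ∀ γ δ, fd γ δ - f (φ γ) (φ δ) = u δ - u (γ * δ) + u γ)
    (h3G : ∀ F : G → G → G → ZMod p,
      (∀ g h j l, F h j l - F (g * h) j l + F g (h * j) l - F g h (j * l) + F g h j = 0) →
      ∃ f : G → G → ZMod p, ∀ g h j,
        F g h j = f h j - f (g * h) j + f g (h * j) - f g h) :
    ∀ (n : ℕ) (A : Type v) [AddCommGroup A] [Module (ZMod p) A] [Finite A]
      [DistribMulAction G A],
      Nat.card A ≤ n →
      IsPGroup p (DistribMulAction.toAddAut G A).range →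
      (∀ g : G, ∃ γ : Γd, ∀ a : A, g • a = φ γ • a) →
      Cmp18 φ A := by
  intro n
  induction n with
  | zero =>
    intro A _ _ _ _ hcard _ _
    have : 0 < Nat.card A := Nat.card_pos
    omega
  | succ n ih =>
    intro A _ _ _ _ hcard hp hd
    rcases subsingleton_or_nontrivial A with hAs | hAn
    · exact ⟨⟨fun c c' _ _ _ => ⟨0, fun g => Subsingleton.elim _ _⟩,
        fun cd _ => ⟨fun _ => 0, fun g h => Subsingleton.elim _ _,
          0, fun γ => Subsingleton.elim _ _⟩⟩,
        ⟨fun f _ _ => ⟨fun _ => 0, fun g h => Subsingleton.elim _ _⟩,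
        fun fd _ => ⟨fun _ _ => 0, fun g h j => Subsingleton.elim _ _,
          fun _ => 0, fun γ δ => Subsingleton.elim _ _⟩⟩⟩
    -- p divides the cardinality of A
    haveI : NeZero p := ⟨(Fact.out : p.Prime).ne_zero⟩
    have hdvd : p ∣ Nat.card A := by
      haveI : Fintype A := Fintype.ofFinite A
      have h1 : Fintype.card A = Fintype.card (ZMod p) ^ Module.finrank (ZMod p) A :=
        Module.card_eq_pow_finrank
      rw [ZMod.card] at h1
      have h2 : Module.finrank (ZMod p) A ≠ 0 := by
        intro h0
        rw [h0, pow_zero] at h1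
        have := Fintype.one_lt_card (α := A)
        omega
      rw [Nat.card_eq_fintype_card, h1]
      exact dvd_pow_self p h2
    -- a nonzero fixed vector
    obtain ⟨a₀, ha₀fix, ha₀ne0⟩ :
        ∃ b, b ∈ MulAction.fixedPoints (DistribMulAction.toAddAut G A).range A ∧ (0 : A) ≠ b := by
      refine hp.exists_fixed_point_of_prime_dvd_card_of_fixed_point A hdvd (a := (0 : A)) ?_
      intro x
      show x • (0 : A) = 0
      exact x.1.map_zero
    have hfix : ∀ g : G, g • a₀ = a₀ := by
      intro g
      have := ha₀fix ⟨DistribMulAction.toAddAut G A g, ⟨g, rfl⟩⟩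
      exact this
    -- scalar-action commutation
    have cms : ∀ (g : G) (k : ZMod p) (a : A), g • (k • a) = k • (g • a) := by
      intro g k a
      have hk : ∀ b : A, k • b = k.val • b := fun b => by
        rw [← Nat.cast_smul_eq_nsmul (ZMod p) k.val b, ZMod.natCast_val, ZMod.cast_id]
      rw [hk, hk, smul_comm]
    -- the line spanned by a₀ and its coordinate function
    have ha₀ : a₀ ≠ 0 := fun h => ha₀ne0 h.symm
    set B : Submodule (ZMod p) A := Submodule.span (ZMod p) {a₀} with hBdef
    have ιinj : Function.Injective (fun k : ZMod p => k • a₀) :=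
      smul_left_injective (ZMod p) ha₀
    set ρ : A → ZMod p := Function.invFun (fun k : ZMod p => k • a₀) with hρdef
    have ρι : ∀ k : ZMod p, ρ (k • a₀) = k := Function.leftInverse_invFun ιinj
    have ιρ : ∀ a : A, a ∈ B → (ρ a) • a₀ = a := by
      intro a ha
      obtain ⟨k, hk⟩ := Submodule.mem_span_singleton.1 ha
      exact Function.invFun_eq (f := fun k : ZMod p => k • a₀) ⟨k, hk⟩
    have memB : ∀ k : ZMod p, k • a₀ ∈ B :=
      fun k => Submodule.smul_mem _ _ (Submodule.mem_span_singleton_self a₀)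
    have hfixB : ∀ (g : G) (b : A), b ∈ B → g • b = b := by
      intro g b hb
      obtain ⟨k, rfl⟩ := Submodule.mem_span_singleton.1 hb
      rw [cms, hfix]
    -- the quotient module A ⧸ B with its G-action
    let L : G → A →ₗ[ZMod p] A := fun g =>
      { toFun := fun a => g • a
        map_add' := smul_add g
        map_smul' := fun k a => cms g k a }
    have hle : ∀ g : G, B ≤ B.comap (L g) := by
      intro g
      rw [hBdef, Submodule.span_singleton_le_iff_mem]
      refine Submodule.mem_comap.2 ?_
      show g • a₀ ∈ B
      rw [hfix g]
      exact Submodule.mem_span_singleton_self a₀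
    let Q : G → (A ⧸ B) →ₗ[ZMod p] (A ⧸ B) := fun g => Submodule.mapQ B B (L g) (hle g)
    have hQmk : ∀ (g : G) (a : A), Q g (Submodule.Quotient.mk a) = Submodule.Quotient.mk (g • a) :=
      fun g a => Submodule.mapQ_apply B B (L g) a
    letI : DistribMulAction G (A ⧸ B) :=
      { smul := fun g x => Q g x
        one_smul := by
          intro x
          obtain ⟨a, rfl⟩ := Submodule.Quotient.mk_surjective B x
          show Q 1 _ = _
          rw [hQmk, one_smul]
        mul_smul := by
          intro g h x
          obtain ⟨a, rfl⟩ := Submodule.Quotient.mk_surjective B x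
          show Q (g * h) _ = Q g (Q h _)
          rw [hQmk, hQmk, hQmk, mul_smul]
        smul_zero := fun g => (Q g).map_zero
        smul_add := fun g x y => (Q g).map_add x y }
    have hmk : ∀ (g : G) (a : A),
        g • (Submodule.Quotient.mk a : A ⧸ B) = Submodule.Quotient.mk (g • a) := hQmk
    haveI : Finite (A ⧸ B) := Finite.of_surjective _ (Submodule.Quotient.mk_surjective B)
    -- cardinality drops
    have hcard' : Nat.card (A ⧸ B) ≤ n := by
      have h1 : Nat.card A = Nat.card B * Nat.card (A ⧸ B) :=
        Submodule.card_eq_card_quotient_mul_card B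
      have h2 : 2 ≤ Nat.card B := by
        haveI : Nontrivial B := ⟨⟨0, ⟨a₀, Submodule.mem_span_singleton_self a₀⟩,
          fun h => ha₀ (congrArg Subtype.val h).symm⟩⟩
        exact Finite.one_lt_card
      have h3 : 0 < Nat.card (A ⧸ B) := Nat.card_pos
      have h4 : 2 * Nat.card (A ⧸ B) ≤ Nat.card A := by
        rw [h1]; exact Nat.mul_le_mul_right _ h2
      omega
    -- the p-group condition on the quotient
    have hp' : IsPGroup p (DistribMulAction.toAddAut G (A ⧸ B)).range := by
      rintro ⟨x, g, rfl⟩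
      obtain ⟨k, hk⟩ := hp ⟨DistribMulAction.toAddAut G A g, g, rfl⟩
      refine ⟨k, ?_⟩
      have hk' : (DistribMulAction.toAddAut G A g) ^ (p ^ k) = 1 := congrArg Subtype.val hk
      rw [← map_pow] at hk'
      have hfix2 : ∀ a : A, (g ^ (p ^ k)) • a = a := by
        intro a
        have := congrArg (fun f : AddAut A => f a) hk'
        exact this
      apply Subtype.ext
      rw [SubgroupClass.coe_pow, ← map_pow]
      ext x
      obtain ⟨a, rfl⟩ := Submodule.Quotient.mk_surjective B x
      show (g ^ (p ^ k)) • (Submodule.Quotient.mk a : A ⧸ B) = Submodule.Quotient.mk a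
      rw [hmk, hfix2]
    -- density on the quotient
    have hd' : ∀ g : G, ∃ γ : Γd, ∀ x : A ⧸ B, g • x = φ γ • x := by
      intro g
      obtain ⟨γ, hγ⟩ := hd g
      refine ⟨γ, ?_⟩
      intro x
      obtain ⟨a, rfl⟩ := Submodule.Quotient.mk_surjective B x
      rw [hmk, hmk, hγ]
    -- inductive hypothesis on the quotient
    obtain ⟨⟨ih1inj, ih1surj⟩, ⟨ih2inj, ih2surj⟩⟩ := ih (A ⧸ B) hcard' hp' hd'
    -- quotient map as linear map, and a section
    set π : A →ₗ[ZMod p] A ⧸ B := Submodule.mkQ B with hπdef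
    have hπsurj : Function.Surjective π := Submodule.mkQ_surjective B
    set σ : (A ⧸ B) → A := Function.surjInv hπsurj with hσdef
    have hσ : ∀ x, π (σ x) = x := Function.surjInv_eq hπsurj
    have hπ0 : ∀ a : A, π a = 0 ↔ a ∈ B := fun a => by
      rw [hπdef]; rw [Submodule.mkQ_apply, Submodule.Quotient.mk_eq_zero]
    have hπsm : ∀ (g : G) (a : A), π (g • a) = g • π a := by
      intro g a
      rw [hπdef]
      show Submodule.Quotient.mk (g • a) = g • Submodule.Quotient.mk a
      rw [hmk]
    -- micro-helpers for the line B
    have htB : ∀ (g : G) (k : ZMod p), g • (k • a₀) = k • a₀ := fun g k => hfixB g _ (memB k)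
    have ρ0 : ρ (0 : A) = 0 := by
      have h := ρι 0
      rwa [zero_smul] at h
    constructor
    constructor
    -- ================= Chase 1 : H¹ injectivity ===================
    · intro c c' hc hc' hcb
      obtain ⟨a, ha⟩ := hcb
      have hdcoc : ∀ g h : G, (c (g*h) - c' (g*h)) = (c g - c' g) + g • (c h - c' h) := by
        intro g h
        rw [hc, hc', smul_sub]
        abel
      -- project to the quotient and use injectivity there
      obtain ⟨a', ha'⟩ := ih1inj (fun g => π (c g - c' g)) 0
        (by
          intro g h
          show π (c (g*h) - c' (g*h)) = π (c g - c' g) + g • π (c h - c' h)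
          rw [hdcoc, map_add, hπsm])
        (by intro g h; show (0 : A ⧸ B) = 0 + g • (0 : A ⧸ B); rw [smul_zero, add_zero])
        ⟨π a, by
          intro γ
          show π (c (φ γ) - c' (φ γ)) - 0 = φ γ • π a - π a
          rw [ha, map_sub, hπsm, sub_zero]⟩
      -- ha' : ∀ g, π (c g - c' g) - 0 = g • a' - a'
      -- the element x = π a - a' is fixed by Γ, hence by G
      have hxΓ : ∀ γ : Γd, φ γ • (π a - a') = π a - a' := by
        intro γ
        have h1 := ha' (φ γ)
        simp only [Pi.zero_apply, sub_zero] at h1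
        have h2 : π (c (φ γ) - c' (φ γ)) = φ γ • π a - π a := by
          rw [ha, map_sub, hπsm]
        rw [h2] at h1
        rw [smul_sub]
        exact sub_eq_sub_iff_sub_eq_sub.mp h1
      have hxG : ∀ g : G, g • (π a - a') = π a - a' := by
        intro g
        obtain ⟨γ, hγ⟩ := hd' g
        rw [hγ]
        exact hxΓ γ
      set dd : G → A := fun g => (c g - c' g) - (g • a - a) with hdd
      have hddB : ∀ g : G, dd g ∈ B := by
        intro g
        rw [← hπ0]
        show π ((c g - c' g) - (g • a - a)) = 0
        have h1 := ha' g
        simp only [Pi.zero_apply, sub_zero] at h1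
        simp only [map_sub, hπsm] at h1 ⊢
        rw [h1]
        have h2 := hxG g
        rw [smul_sub] at h2
        rw [sub_eq_zero]
        exact (sub_eq_sub_iff_sub_eq_sub.mp h2).symm
      have hddcoc : ∀ g h : G, dd (g*h) = dd g + g • dd h := by
        intro g h
        show (c (g*h) - c' (g*h)) - ((g*h) • a - a)
            = ((c g - c' g) - (g • a - a)) + g • ((c h - c' h) - (h • a - a))
        rw [hc, hc', mul_smul]
        simp only [smul_sub]
        abel
      have hc₀ : ∀ g h : G, ρ (dd (g*h)) = ρ (dd g) + ρ (dd h) := by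
        intro g h
        apply ιinj
        show ρ (dd (g*h)) • a₀ = (ρ (dd g) + ρ (dd h)) • a₀
        rw [add_smul, ιρ _ (hddB (g*h)), ιρ _ (hddB g), ιρ _ (hddB h), hddcoc,
          hfixB g _ (hddB h)]
      have hres0 : ∀ γ : Γd, dd (φ γ) = 0 := by
        intro γ
        show (c (φ γ) - c' (φ γ)) - (φ γ • a - a) = 0
        rw [ha, sub_self]
      have hzero : (fun g => ρ (dd g)) = 0 :=
        h1inj _ 0 hc₀ (by intro g h; simp)
          (by intro γ; simp [hres0, ρ0])
      refine ⟨a, fun g => ?_⟩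
      have h3 : dd g = 0 := by
        rw [← ιρ _ (hddB g)]
        have := congrFun hzero g
        simp only [Pi.zero_apply] at this
        rw [this, zero_smul]
      exact sub_eq_zero.mp h3
    -- ================= Chase 2 : H¹ surjectivity ===================
    · intro cd hcd
      obtain ⟨c', hc'coc, a', ha'⟩ := ih1surj (fun γ => π (cd γ))
        (by intro γ δ
            show π (cd (γ * δ)) = π (cd γ) + φ γ • π (cd δ)
            rw [hcd, map_add, hπsm])
      -- ha' : ∀ γ, π (cd γ) - c' (φ γ) = φ γ • a' - a'
      set cb : G → A := fun g => σ (c' g) with hcb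
      set ab : A := σ a' with hab
      have hπcb : ∀ g : G, π (cb g) = c' g := fun g => hσ (c' g)
      have hπab : π ab = a' := hσ a'
      set f : G → G → A := fun g h => g • cb h - cb (g*h) + cb g with hfd
      have hfB : ∀ g h : G, f g h ∈ B := by
        intro g h
        rw [← hπ0]
        show π (g • cb h - cb (g*h) + cb g) = 0
        simp only [map_add, map_sub, hπsm, hπcb]
        rw [hc'coc]
        abel
      have hfcoc : ∀ g h j : G, g • f h j - f (g*h) j + f g (h*j) - f g h = 0 := by
        intro g h j
        exact cb2' (fun x : G => x) (fun _ _ => rfl) cb g h j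
      set u : Γd → A := fun γ => cd γ - cb (φ γ) - (φ γ • ab - ab) with hud
      have huB : ∀ γ : Γd, u γ ∈ B := by
        intro γ
        rw [← hπ0]
        show π (cd γ - cb (φ γ) - (φ γ • ab - ab)) = 0
        simp only [map_sub, hπsm, hπcb, hπab]
        rw [sub_eq_zero]
        exact ha' γ
      have hcbφ : ∀ x : Γd, cb (φ x) = cd x - u x - (φ x • ab - ab) := by
        intro x
        simp only [hud]
        abel
      have hfres : ∀ γ δ : Γd, f (φ γ) (φ δ) = u (γ * δ) - u γ - u δ := by
        intro γ δ
        have ht : φ γ • u δ = u δ := hfixB _ _ (huB δ)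
        show φ γ • cb (φ δ) - cb (φ γ * φ δ) + cb (φ γ) = u (γ * δ) - u γ - u δ
        rw [← map_mul, hcbφ, hcbφ, hcbφ, hcd]
        simp only [smul_sub, smul_add, map_mul, mul_smul]
        rw [ht]
        abel
      obtain ⟨w, hw⟩ := h2inj (fun g h => ρ (f g h))
        (by intro g h j
            apply ιinj
            show (ρ (f h j) - ρ (f (g*h) j) + ρ (f g (h*j)) - ρ (f g h)) • a₀ = (0:ZMod p) • a₀
            rw [zero_smul, sub_smul, add_smul, sub_smul,
              ιρ _ (hfB h j), ιρ _ (hfB (g*h) j), ιρ _ (hfB g (h*j)), ιρ _ (hfB g h)]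
            have h5 := hfcoc g h j
            rw [hfixB g _ (hfB h j)] at h5
            exact h5)
        ⟨fun γ => - ρ (u γ), by
          intro γ δ
          apply ιinj
          show ρ (f (φ γ) (φ δ)) • a₀ = (-ρ (u δ) - -ρ (u (γ*δ)) + -ρ (u γ)) • a₀
          rw [ιρ _ (hfB _ _), hfres]
          simp only [add_smul, sub_smul, neg_smul]
          rw [ιρ _ (huB δ), ιρ _ (huB (γ*δ)), ιρ _ (huB γ)]
          abel⟩
      -- hw : ∀ g h, ρ (f g h) = w h - w (g*h) + w g
      obtain ⟨c₀, hc₀add, hc₀⟩ := h1surj (fun γ => ρ (u γ) + w (φ γ))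
        (by intro γ δ
            apply ιinj
            show (ρ (u (γ*δ)) + w (φ (γ*δ))) • a₀
                = ((ρ (u γ) + w (φ γ)) + (ρ (u δ) + w (φ δ))) • a₀
            have h2 : w (φ (γ*δ)) = w (φ δ) + w (φ γ) - ρ (f (φ γ) (φ δ)) := by
              rw [map_mul, hw (φ γ) (φ δ)]
              ring
            rw [h2]
            simp only [add_smul, sub_smul]
            rw [ιρ _ (huB (γ*δ)), ιρ _ (huB γ), ιρ _ (huB δ), ιρ _ (hfB (φ γ) (φ δ)), hfres]
            abel)
      refine ⟨fun g => cb g - w g • a₀ + c₀ g • a₀, ?_, ab, ?_⟩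
      · intro g h
        show cb (g*h) - w (g*h) • a₀ + c₀ (g*h) • a₀
            = (cb g - w g • a₀ + c₀ g • a₀) + g • (cb h - w h • a₀ + c₀ h • a₀)
        have h1 : f g h = (w h - w (g*h) + w g) • a₀ := by
          rw [← hw, ιρ _ (hfB g h)]
        have h2 : cb (g*h) = g • cb h + cb g - f g h := by
          simp only [hfd]
          abel
        rw [h2, h1, hc₀add]
        simp only [smul_add, smul_sub]
        rw [htB g (w h), htB g (c₀ h)]
        simp only [add_smul, sub_smul]
        abel
      · intro γ
        show cd γ - (cb (φ γ) - w (φ γ) • a₀ + c₀ (φ γ) • a₀) = φ γ • ab - ab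
        have h1 : c₀ (φ γ) = ρ (u γ) + w (φ γ) := (hc₀ γ).symm
        have h2 : cd γ = cb (φ γ) + u γ + (φ γ • ab - ab) := by
          simp only [hud]
          abel
        rw [h1, h2, add_smul, ιρ _ (huB γ)]
        abel
    constructor
    -- ================= Chase 3 : H² injectivity ===================
    · intro f hf hres
      obtain ⟨u, hu⟩ := hres
      obtain ⟨u', hu'⟩ := ih2inj (fun g h => π (f g h))
        (by intro g h j
            have h5 := congrArg (fun x => π x) (hf g h j)
            simpa only [map_add, map_sub, map_zero, hπsm] using h5)
        ⟨fun γ => π (u γ), by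
          intro γ δ
          show π (f (φ γ) (φ δ)) = φ γ • π (u δ) - π (u (γ*δ)) + π (u γ)
          rw [hu]
          simp only [map_add, map_sub, hπsm]⟩
      -- hu' : ∀ g h, π (f g h) = g • u' h - u' (g*h) + u' g
      set ub : G → A := fun g => σ (u' g) with hub
      have hπub : ∀ g : G, π (ub g) = u' g := fun g => hσ _
      set f₁ : G → G → A := fun g h => f g h - (g • ub h - ub (g*h) + ub g) with hf₁
      have hf₁B : ∀ g h : G, f₁ g h ∈ B := by
        intro g h
        rw [← hπ0]
        show π (f g h - (g • ub h - ub (g*h) + ub g)) = 0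
        simp only [map_add, map_sub, hπsm, hπub]
        rw [hu', sub_self]
      have hf₁coc : ∀ g h j : G, g • f₁ h j - f₁ (g*h) j + f₁ g (h*j) - f₁ g h = 0 := by
        intro g h j
        simp only [hf₁]
        exact coc2_sub f (fun g h => g • ub h - ub (g*h) + ub g) hf
          (fun g h j => cb2' (fun x : G => x) (fun _ _ => rfl) ub g h j) g h j
      set u₁ : Γd → A := fun γ => u γ - ub (φ γ) with hu₁
      have hf₁res : ∀ γ δ : Γd, f₁ (φ γ) (φ δ) = φ γ • u₁ δ - u₁ (γ*δ) + u₁ γ := by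
        intro γ δ
        simp only [hf₁, hu₁]
        rw [hu, map_mul]
        simp only [smul_sub]
        abel
      have hπu₁coc : ∀ γ δ : Γd, π (u₁ (γ*δ)) = π (u₁ γ) + φ γ • π (u₁ δ) := by
        intro γ δ
        have h5 : π (f₁ (φ γ) (φ δ)) = 0 := (hπ0 _).2 (hf₁B _ _)
        rw [hf₁res] at h5
        simp only [map_add, map_sub, hπsm] at h5
        have h6 : π (u₁ (γ*δ)) - (π (u₁ γ) + φ γ • π (u₁ δ))
            = -(φ γ • π (u₁ δ) - π (u₁ (γ*δ)) + π (u₁ γ)) := by abel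
        have h7 : π (u₁ (γ*δ)) - (π (u₁ γ) + φ γ • π (u₁ δ)) = 0 := by
          rw [h6, h5, neg_zero]
        exact sub_eq_zero.mp h7
      obtain ⟨v', hv'coc, a', ha'⟩ := ih1surj (fun γ => π (u₁ γ)) hπu₁coc
      set vb : G → A := fun g => σ (v' g) with hvb
      have hπvb : ∀ g : G, π (vb g) = v' g := fun g => hσ _
      set ab : A := σ a' with hab
      have hπab : π ab = a' := hσ _
      set k : G → G → A := fun g h => g • vb h - vb (g*h) + vb g with hk
      have hkB : ∀ g h : G, k g h ∈ B := by
        intro g h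
        rw [← hπ0]
        show π (g • vb h - vb (g*h) + vb g) = 0
        simp only [map_add, map_sub, hπsm, hπvb]
        rw [hv'coc]
        abel
      have hkcoc : ∀ g h j : G, g • k h j - k (g*h) j + k g (h*j) - k g h = 0 := by
        intro g h j
        simp only [hk]
        exact cb2' (fun x : G => x) (fun _ _ => rfl) vb g h j
      set f₂ : G → G → A := fun g h => f₁ g h - k g h with hf₂
      have hf₂B : ∀ g h : G, f₂ g h ∈ B := fun g h => sub_mem (hf₁B g h) (hkB g h)
      have hf₂coc : ∀ g h j : G, g • f₂ h j - f₂ (g*h) j + f₂ g (h*j) - f₂ g h = 0 := by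
        intro g h j
        simp only [hf₂]
        exact coc2_sub f₁ k hf₁coc hkcoc g h j
      set u₂ : Γd → A := fun γ => u₁ γ - vb (φ γ) - (φ γ • ab - ab) with hu₂
      have hu₂B : ∀ γ : Γd, u₂ γ ∈ B := by
        intro γ
        rw [← hπ0]
        show π (u₁ γ - vb (φ γ) - (φ γ • ab - ab)) = 0
        simp only [map_sub, hπsm, hπvb, hπab]
        rw [sub_eq_zero]
        exact ha' γ
      have hf₂res : ∀ γ δ : Γd, f₂ (φ γ) (φ δ) = φ γ • u₂ δ - u₂ (γ*δ) + u₂ γ := by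
        intro γ δ
        simp only [hf₂, hk, hu₂]
        rw [hf₁res, map_mul]
        simp only [smul_sub, map_mul, mul_smul]
        abel
      obtain ⟨w, hw⟩ := h2inj (fun g h => ρ (f₂ g h))
        (by intro g h j
            apply ιinj
            show (ρ (f₂ h j) - ρ (f₂ (g*h) j) + ρ (f₂ g (h*j)) - ρ (f₂ g h)) • a₀
                = (0:ZMod p) • a₀
            rw [zero_smul]
            simp only [sub_smul, add_smul]
            rw [ιρ _ (hf₂B h j), ιρ _ (hf₂B (g*h) j), ιρ _ (hf₂B g (h*j)), ιρ _ (hf₂B g h)]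
            have h5 := hf₂coc g h j
            rw [hfixB g _ (hf₂B h j)] at h5
            exact h5)
        ⟨fun γ => ρ (u₂ γ), by
          intro γ δ
          apply ιinj
          show ρ (f₂ (φ γ) (φ δ)) • a₀ = (ρ (u₂ δ) - ρ (u₂ (γ*δ)) + ρ (u₂ γ)) • a₀
          simp only [sub_smul, add_smul]
          rw [ιρ _ (hf₂B _ _), ιρ _ (hu₂B δ), ιρ _ (hu₂B (γ*δ)), ιρ _ (hu₂B γ), hf₂res,
            hfixB (φ γ) _ (hu₂B δ)]⟩
      -- hw : ∀ g h, ρ (f₂ g h) = w h - w (g*h) + w g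
      refine ⟨fun g => ub g + vb g + w g • a₀, ?_⟩
      intro g h
      show f g h = g • (ub h + vb h + w h • a₀) - (ub (g*h) + vb (g*h) + w (g*h) • a₀)
          + (ub g + vb g + w g • a₀)
      have h1 : f₂ g h = (w h - w (g*h) + w g) • a₀ := by
        rw [← hw, ιρ _ (hf₂B g h)]
      have h2 : f g h = f₂ g h + k g h + (g • ub h - ub (g*h) + ub g) := by
        simp only [hf₂, hf₁]
        abel
      rw [h2, h1]
      simp only [hk, smul_add, smul_sub]
      rw [htB g (w h)]
      simp only [sub_smul, add_smul]
      abel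
    -- ================= Chase 4 : H² surjectivity ===================
    · intro fd hfd
      obtain ⟨f', hf'coc, u', hu'⟩ := ih2surj (fun γ δ => π (fd γ δ))
        (by intro γ δ ε
            have h5 := congrArg (fun x => π x) (hfd γ δ ε)
            simpa only [map_add, map_sub, map_zero, hπsm] using h5)
      set fb : G → G → A := fun g h => σ (f' g h) with hfb
      have hπfb : ∀ g h : G, π (fb g h) = f' g h := fun g h => hσ _
      set ub : Γd → A := fun γ => σ (u' γ) with hub
      have hπub : ∀ γ : Γd, π (ub γ) = u' γ := fun γ => hσ _
      set F : G → G → G → A := fun g h j => g • fb h j - fb (g*h) j + fb g (h*j) - fb g h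
        with hF
      have hFB : ∀ g h j : G, F g h j ∈ B := by
        intro g h j
        rw [← hπ0]
        show π (g • fb h j - fb (g*h) j + fb g (h*j) - fb g h) = 0
        simp only [map_add, map_sub, hπsm, hπfb]
        exact hf'coc g h j
      have hFcoc : ∀ g h j l : G,
          g • F h j l - F (g*h) j l + F g (h*j) l - F g h (j*l) + F g h j = 0 := by
        intro g h j l
        simp only [hF]
        exact cb3' (fun x : G => x) (fun _ _ => rfl) fb g h j l
      obtain ⟨m, hm⟩ := h3G (fun g h j => ρ (F g h j))
        (by intro g h j l
            apply ιinj
            show (ρ (F h j l) - ρ (F (g*h) j l) + ρ (F g (h*j) l) - ρ (F g h (j*l))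
                + ρ (F g h j)) • a₀ = (0:ZMod p) • a₀
            rw [zero_smul]
            simp only [sub_smul, add_smul]
            rw [ιρ _ (hFB h j l), ιρ _ (hFB (g*h) j l), ιρ _ (hFB g (h*j) l),
              ιρ _ (hFB g h (j*l)), ιρ _ (hFB g h j)]
            have h5 := hFcoc g h j l
            rw [hfixB g _ (hFB h j l)] at h5
            exact h5)
      -- hm : ρ (F g h j) = m h j - m (g*h) j + m g (h*j) - m g h
      set f₀ : G → G → A := fun g h => fb g h - m g h • a₀ with hf₀
      have hπf₀ : ∀ g h : G, π (f₀ g h) = f' g h := by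
        intro g h
        show π (fb g h - m g h • a₀) = f' g h
        rw [map_sub, hπfb]
        have h5 : π (m g h • a₀) = 0 := (hπ0 _).2 (memB _)
        rw [h5, sub_zero]
      have hf₀coc : ∀ g h j : G, g • f₀ h j - f₀ (g*h) j + f₀ g (h*j) - f₀ g h = 0 := by
        intro g h j
        have h1 : F g h j = (m h j - m (g*h) j + m g (h*j) - m g h) • a₀ := by
          rw [← hm, ιρ _ (hFB g h j)]
        show g • (fb h j - m h j • a₀) - (fb (g*h) j - m (g*h) j • a₀)
            + (fb g (h*j) - m g (h*j) • a₀) - (fb g h - m g h • a₀) = 0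
        simp only [smul_sub]
        rw [htB g (m h j)]
        have h2 : g • fb h j - m h j • a₀ - (fb (g*h) j - m (g*h) j • a₀)
              + (fb g (h*j) - m g (h*j) • a₀) - (fb g h - m g h • a₀)
            = (g • fb h j - fb (g*h) j + fb g (h*j) - fb g h)
              - (m h j - m (g*h) j + m g (h*j) - m g h) • a₀ := by
          simp only [sub_smul, add_smul]
          abel
        rw [h2, ← h1]
        show F g h j - F g h j = 0
        rw [sub_self]
      set w : Γd → Γd → A :=
        fun γ δ => fd γ δ - f₀ (φ γ) (φ δ) - (φ γ • ub δ - ub (γ*δ) + ub γ) with hwd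
      have hwB : ∀ γ δ : Γd, w γ δ ∈ B := by
        intro γ δ
        rw [← hπ0]
        show π (fd γ δ - f₀ (φ γ) (φ δ) - (φ γ • ub δ - ub (γ*δ) + ub γ)) = 0
        simp only [map_add, map_sub, hπsm, hπf₀, hπub]
        rw [sub_eq_zero]
        exact hu' γ δ
      have hwcoc : ∀ γ δ ε : Γd, φ γ • w δ ε - w (γ*δ) ε + w γ (δ*ε) - w γ δ = 0 := by
        intro γ δ ε
        have hA := hfd γ δ ε
        have hBc : φ γ • f₀ (φ δ) (φ ε) - f₀ (φ (γ*δ)) (φ ε) + f₀ (φ γ) (φ (δ*ε))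
            - f₀ (φ γ) (φ δ) = 0 := by
          simp only [map_mul]
          exact hf₀coc (φ γ) (φ δ) (φ ε)
        have hCc := cb2' (fun γ : Γd => φ γ) (fun x y => map_mul φ x y) ub γ δ ε
        have h2 : φ γ • w δ ε - w (γ*δ) ε + w γ (δ*ε) - w γ δ
            = (φ γ • fd δ ε - fd (γ*δ) ε + fd γ (δ*ε) - fd γ δ)
              - (φ γ • f₀ (φ δ) (φ ε) - f₀ (φ (γ*δ)) (φ ε) + f₀ (φ γ) (φ (δ*ε))
                  - f₀ (φ γ) (φ δ))
              - (φ γ • (φ δ • ub ε - ub (δ*ε) + ub δ)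
                  - (φ (γ*δ) • ub ε - ub (γ*δ*ε) + ub (γ*δ))
                  + (φ γ • ub (δ*ε) - ub (γ*(δ*ε)) + ub γ)
                  - (φ γ • ub δ - ub (γ*δ) + ub γ)) := by
          simp only [hwd, smul_sub, smul_add]
          abel
        rw [h2, hA, hBc, hCc]
        simp
      obtain ⟨h₂, hh₂coc, v, hv⟩ := h2surj (fun γ δ => ρ (w γ δ))
        (by intro γ δ ε
            apply ιinj
            show (ρ (w δ ε) - ρ (w (γ*δ) ε) + ρ (w γ (δ*ε)) - ρ (w γ δ)) • a₀
                = (0:ZMod p) • a₀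
            rw [zero_smul]
            simp only [sub_smul, add_smul]
            rw [ιρ _ (hwB δ ε), ιρ _ (hwB (γ*δ) ε), ιρ _ (hwB γ (δ*ε)), ιρ _ (hwB γ δ)]
            have h5 := hwcoc γ δ ε
            rw [hfixB (φ γ) _ (hwB δ ε)] at h5
            exact h5)
      -- hv : ∀ γ δ, ρ (w γ δ) - h₂ (φ γ) (φ δ) = v δ - v (γ*δ) + v γ
      refine ⟨fun g h => f₀ g h + h₂ g h • a₀, ?_, fun γ => ub γ + v γ • a₀, ?_⟩
      · intro g h j
        show g • (f₀ h j + h₂ h j • a₀) - (f₀ (g*h) j + h₂ (g*h) j • a₀)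
            + (f₀ g (h*j) + h₂ g (h*j) • a₀) - (f₀ g h + h₂ g h • a₀) = 0
        simp only [smul_add]
        rw [htB g (h₂ h j)]
        have h5 := hf₀coc g h j
        have h6 : (h₂ h j - h₂ (g*h) j + h₂ g (h*j) - h₂ g h) • a₀ = (0:ZMod p) • a₀ := by
          rw [hh₂coc]
        rw [zero_smul] at h6
        simp only [sub_smul, add_smul] at h6
        have h7 : g • f₀ h j + h₂ h j • a₀ - (f₀ (g*h) j + h₂ (g*h) j • a₀)
              + (f₀ g (h*j) + h₂ g (h*j) • a₀) - (f₀ g h + h₂ g h • a₀)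
            = (g • f₀ h j - f₀ (g*h) j + f₀ g (h*j) - f₀ g h)
              + (h₂ h j • a₀ - h₂ (g*h) j • a₀ + h₂ g (h*j) • a₀ - h₂ g h • a₀) := by
          abel
        rw [h7, h5, h6, add_zero]
      · intro γ δ
        show fd γ δ - (f₀ (φ γ) (φ δ) + h₂ (φ γ) (φ δ) • a₀)
            = φ γ • (ub δ + v δ • a₀) - (ub (γ*δ) + v (γ*δ) • a₀) + (ub γ + v γ • a₀)
        have h5 : ρ (w γ δ) • a₀ = w γ δ := ιρ _ (hwB γ δ)
        have h8 : ρ (w γ δ) = h₂ (φ γ) (φ δ) + (v δ - v (γ*δ) + v γ) :=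
          sub_eq_iff_eq_add'.mp (hv γ δ)
        have h7 : w γ δ = h₂ (φ γ) (φ δ) • a₀ + (v δ - v (γ*δ) + v γ) • a₀ := by
          rw [← h5, h8, add_smul]
        have h9 : fd γ δ = w γ δ + f₀ (φ γ) (φ δ) + (φ γ • ub δ - ub (γ*δ) + ub γ) := by
          simp only [hwd]
          abel
        simp only [smul_add]
        rw [htB (φ γ) (v δ)]
        rw [h9, h7]
        simp only [sub_smul, add_smul]
        abel






/-- Comparison of group cohomology along a homomorphism `φ : Γᵈ → G` (the discrete
Demuškin group mapping to the profinite Galois group), via the five lemma.  Suppose the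
comparison maps are isomorphisms on `H¹(−, 𝔽_p)` and `H²(−, 𝔽_p)` (trivial coefficients)
and `H³(−, 𝔽_p) = 0` on both sides.  Then for every finite `𝔽_p`-module `A` whose action
(of `G`, factoring through `φ` up to density) has `p`-group image, the comparison maps
`H¹(G, A) → H¹(Γᵈ, A)` and `H²(G, A) → H²(Γᵈ, A)` are isomorphisms.  All cohomology is
expressed at the level of inhomogeneous cocycles and coboundaries. -/
theorem stmt18 {p : ℕ} [Fact p.Prime] {Γd G A : Type*} [Group Γd] [Group G]
    (φ : Γd →* G)
    [AddCommGroup A] [Module (ZMod p) A] [Finite A] [DistribMulAction G A]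
    (hpgrp : IsPGroup p (DistribMulAction.toAddAut G A).range)
    (hdense : ∀ g : G, ∃ γ : Γd, ∀ a : A, g • a = φ γ • a)
    -- (a) comparison is an isomorphism on H¹ with trivial coefficients 𝔽_p:
    (h1inj : ∀ c c' : G → ZMod p, (∀ g h, c (g * h) = c g + c h) →
      (∀ g h, c' (g * h) = c' g + c' h) → (∀ γ : Γd, c (φ γ) = c' (φ γ)) → c = c')
    (h1surj : ∀ cd : Γd → ZMod p, (∀ γ δ, cd (γ * δ) = cd γ + cd δ) →
      ∃ c : G → ZMod p, (∀ g h, c (g * h) = c g + c h) ∧ ∀ γ : Γd, cd γ = c (φ γ))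
    -- (a) comparison is an isomorphism on H² with trivial coefficients 𝔽_p:
    (h2inj : ∀ f : G → G → ZMod p,
      (∀ g h j, f h j - f (g * h) j + f g (h * j) - f g h = 0) →
      (∃ u : Γd → ZMod p, ∀ γ δ, f (φ γ) (φ δ) = u δ - u (γ * δ) + u γ) →
      ∃ u : G → ZMod p, ∀ g h, f g h = u h - u (g * h) + u g)
    (h2surj : ∀ fd : Γd → Γd → ZMod p,
      (∀ γ δ ε, fd δ ε - fd (γ * δ) ε + fd γ (δ * ε) - fd γ δ = 0) →
      ∃ f : G → G → ZMod p,
        (∀ g h j, f h j - f (g * h) j + f g (h * j) - f g h = 0) ∧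
        ∃ u : Γd → ZMod p, ∀ γ δ, fd γ δ - f (φ γ) (φ δ) = u δ - u (γ * δ) + u γ)
    -- (b) H³(−, 𝔽_p) = 0 on both sides:
    (h3G : ∀ F : G → G → G → ZMod p,
      (∀ g h j l, F h j l - F (g * h) j l + F g (h * j) l - F g h (j * l) + F g h j = 0) →
      ∃ f : G → G → ZMod p, ∀ g h j,
        F g h j = f h j - f (g * h) j + f g (h * j) - f g h)
    (h3Γ : ∀ F : Γd → Γd → Γd → ZMod p,
      (∀ γ δ ε η, F δ ε η - F (γ * δ) ε η + F γ (δ * ε) η - F γ δ (ε * η) + F γ δ ε = 0) →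
      ∃ f : Γd → Γd → ZMod p, ∀ γ δ ε,
        F γ δ ε = f δ ε - f (γ * δ) ε + f γ (δ * ε) - f γ δ) :
    -- H¹(G, A) → H¹(Γᵈ, A) is an isomorphism:
    ((∀ c c' : G → A, (∀ g h, c (g * h) = c g + g • c h) →
        (∀ g h, c' (g * h) = c' g + g • c' h) →
        (∃ a : A, ∀ γ : Γd, c (φ γ) - c' (φ γ) = φ γ • a - a) →
        ∃ a : A, ∀ g : G, c g - c' g = g • a - a) ∧
      (∀ cd : Γd → A, (∀ γ δ, cd (γ * δ) = cd γ + φ γ • cd δ) →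
        ∃ c : G → A, (∀ g h, c (g * h) = c g + g • c h) ∧
          ∃ a : A, ∀ γ : Γd, cd γ - c (φ γ) = φ γ • a - a)) ∧
    -- H²(G, A) → H²(Γᵈ, A) is an isomorphism:
    ((∀ f : G → G → A,
        (∀ g h j, g • f h j - f (g * h) j + f g (h * j) - f g h = 0) →
        (∃ u : Γd → A, ∀ γ δ, f (φ γ) (φ δ) = φ γ • u δ - u (γ * δ) + u γ) →
        ∃ u : G → A, ∀ g h, f g h = g • u h - u (g * h) + u g) ∧
      (∀ fd : Γd → Γd → A,
        (∀ γ δ ε, φ γ • fd δ ε - fd (γ * δ) ε + fd γ (δ * ε) - fd γ δ = 0) →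
        ∃ f : G → G → A,
          (∀ g h j, g • f h j - f (g * h) j + f g (h * j) - f g h = 0) ∧
          ∃ u : Γd → A, ∀ γ δ,
            fd γ δ - f (φ γ) (φ δ) = φ γ • u δ - u (γ * δ) + u γ)) := by
  exact key18 φ h1inj h1surj h2inj h2surj h3G (Nat.card A) A le_rfl hpgrp hdense
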